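/- arXiv:1812.07408 — 2 statements merged into one kernel-verified Lean document; each statement's English description precedes it below -/
import Mathlib

section
/- (Theorem 1.) Suppose y > 0 and let r, t, u be real numbers with Φ(r) = G(y), Φ(t) = α + Φ(r)·(1−α), and Φ(u) = F(y). If r > 0 (the quantile residual of the continuous component is positive, so the positive branch of the zero-adjusted quantile residual applies), then t = u; that is, the zero-adjusted quantile residual r⋆ = Φ⁻¹(α + Φ(r)(1−α)) coincides with the randomized quantile residual r^q = Φ⁻¹(F(y)). -/
open MeasureTheory ProbabilityTheory Set

lemma gaussian_cdf_strictMono : StrictMono (cdf (gaussianReal 0 1)) := by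
  intro a b hab
  have hmeas : (gaussianReal 0 1) (Set.Ioc a b) ≠ 0 := by
    rw [gaussianReal_apply 0 one_ne_zero]
    intro h0
    rw [lintegral_eq_zero_iff (measurable_gaussianPDF 0 1)] at h0
    have : (volume.restrict (Set.Ioc a b)) {x | gaussianPDF 0 1 x ≠ 0} = 0 := h0
    have hs : {x : ℝ | gaussianPDF 0 1 x ≠ 0} = Set.univ := by
      ext x; simp [ne_of_gt (gaussianPDF_pos 0 one_ne_zero x)]
    rw [hs, Measure.restrict_apply_univ] at this
    have := Real.volume_Ioc (a := a) (b := b) ▸ this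
    exact (ENNReal.ofReal_pos.mpr (sub_pos.mpr hab)).ne' this
  have hsplit : (gaussianReal 0 1) (Set.Iic b)
      = (gaussianReal 0 1) (Set.Iic a) + (gaussianReal 0 1) (Set.Ioc a b) := by
    rw [← measure_union (Set.Iic_disjoint_Ioc le_rfl) measurableSet_Ioc,
      Set.Iic_union_Ioc_eq_Iic hab.le]
  rw [cdf_eq_real, cdf_eq_real, measureReal_def, measureReal_def]
  have hfin : (gaussianReal 0 1) (Set.Iic b) ≠ ⊤ := measure_ne_top _ _
  have hfin' : (gaussianReal 0 1) (Set.Iic a) ≠ ⊤ := measure_ne_top _ _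
  refine ENNReal.toReal_lt_toReal hfin' hfin |>.mpr ?_
  rw [hsplit]
  exact ENNReal.lt_add_right hfin' hmeas

/-- Theorem 1: if y > 0, Φ(r) = G(y), Φ(t) = α + Φ(r)(1−α), Φ(u) = F(y)
and r > 0, then t = u: the zero-adjusted quantile residual coincides with the randomized
quantile residual. -/
theorem zar_zaqr_eq_rqr
    (α : ℝ) (hα0 : 0 < α) (hα1 : α < 1)
    (ν : Measure ℝ) [IsProbabilityMeasure ν] (hν : ν (Set.Ioi (0 : ℝ)) = 1)
    (μ : Measure ℝ)
    (hμ : μ = (ENNReal.ofReal α) • Measure.dirac (0 : ℝ)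
            + (ENNReal.ofReal (1 - α)) • ν)
    (y : ℝ) (hy : 0 < y) (r t u : ℝ)
    (hr : cdf (gaussianReal 0 1) r = cdf ν y)
    (ht : cdf (gaussianReal 0 1) t = α + cdf (gaussianReal 0 1) r * (1 - α))
    (hu : cdf (gaussianReal 0 1) u = cdf μ y)
    (hrpos : 0 < r) :
    t = u := by
  have hμprob : IsProbabilityMeasure μ := by
    constructor
    rw [hμ]
    simp only [Measure.add_apply, Measure.smul_apply, smul_eq_mul,
      Measure.dirac_apply_of_mem (Set.mem_univ (0 : ℝ)), measure_univ, mul_one]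
    rw [← ENNReal.ofReal_add hα0.le (by linarith)]
    norm_num
  have hμy : cdf μ y = α + cdf ν y * (1 - α) := by
    rw [cdf_eq_real, measureReal_def, hμ]
    simp only [Measure.add_apply, Measure.smul_apply, smul_eq_mul]
    rw [Measure.dirac_apply_of_mem (by simpa using hy.le : (0:ℝ) ∈ Set.Iic y), mul_one]
    rw [← ofReal_cdf]
    rw [← ENNReal.ofReal_mul (by linarith), ← ENNReal.ofReal_add hα0.le
      (mul_nonneg (by linarith) (cdf_nonneg ν y)), ENNReal.toReal_ofReal
      (add_nonneg hα0.le (mul_nonneg (by linarith) (cdf_nonneg ν y)))]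
    ring
  apply gaussian_cdf_strictMono.injective
  rw [ht, hu, hμy, hr]
end

section
/- (Theorem 2, lower tail.) Let (Ω, P) be a probability space, let B ⊆ Ω be a measurable event with P(B) = 1−α (the event that the response is positive), and let Z : Ω → ℝ be a random variable whose conditional distribution given B is standard normal, i.e., P(B ∩ Z⁻¹(A)) = (1−α)·γ(A) for every Borel set A ⊆ ℝ. If k is a real number with Φ(k) > (1+α)/2, then P(B ∩ {ω : (1−α)·Φ(Z(ω)) < 1−Φ(k)}) = 1−Φ(k). (The event in question is exactly {r⋆ < −k}, so Pr(r⋆ < −k) = 1−Φ(k).) -/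
open MeasureTheory ProbabilityTheory Set Filter Topology

/-- Theorem 2, lower tail: if P(B) = 1−α, the conditional distribution of Z
given B is standard normal, and Φ(k) > (1+α)/2, then
P(B ∩ {(1−α)·Φ(Z) < 1−Φ(k)}) = 1−Φ(k), i.e. Pr(r⋆ < −k) = 1−Φ(k). -/
theorem zaqr_lower_tail
    {Ω : Type*} [MeasurableSpace Ω] (P : Measure Ω) [IsProbabilityMeasure P]
    (α : ℝ) (hα0 : 0 < α) (hα1 : α < 1)
    (B : Set Ω) (hB : MeasurableSet B) (hPB : P B = ENNReal.ofReal (1 - α))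
    (Z : Ω → ℝ) (hZ : Measurable Z)
    (hcond : ∀ A : Set ℝ, MeasurableSet A →
      P (B ∩ Z ⁻¹' A) = ENNReal.ofReal (1 - α) * gaussianReal 0 1 A)
    (k : ℝ) (hk : (1 + α) / 2 < cdf (gaussianReal 0 1) k) :
    P (B ∩ {ω : Ω | (1 - α) * cdf (gaussianReal 0 1) (Z ω)
        < 1 - cdf (gaussianReal 0 1) k})
      = ENNReal.ofReal (1 - cdf (gaussianReal 0 1) k) := by
  set γ := gaussianReal 0 1 with hγ
  set Φ : ℝ → ℝ := ⇑(cdf γ) with hΦ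
  have hac : γ ≪ volume := gaussianReal_absolutelyContinuous 0 (by norm_num)
  have hsing : ∀ t : ℝ, γ {t} = 0 := fun t => hac (by simp)
  set c : ℝ := (1 - Φ k) / (1 - α) with hc
  have h1α : (0:ℝ) < 1 - α := by linarith
  have hΦk1 : Φ k < 1 := by
    by_contra h
    push_neg at h
    have h1 : Φ k = 1 := le_antisymm (cdf_le_one γ k) h
    have : γ (Ioi k) = 0 := by
      have := ofReal_cdf γ k
      rw [← hΦ] at this
      have huniv : γ (Iic k) = 1 := by rw [← this, h1]; simp
      have hcpl := measure_compl (μ := γ) (measurableSet_Iic (a := k)) (measure_ne_top _ _)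
      rw [compl_Iic, huniv] at hcpl
      simpa using hcpl
    have : (volume : Measure ℝ) (Ioi k) = 0 :=
      (gaussianReal_absolutelyContinuous' 0 (by norm_num)) this
    simp at this
  have hc0 : 0 < c := div_pos (by linarith) h1α
  have hc1 : c < 1 := by
    rw [div_lt_one h1α]
    linarith
  -- the set
  set S : Set ℝ := {x | Φ x < c} with hS
  have hSmeas : MeasurableSet S := (monotone_cdf γ).measurable measurableSet_Iio
  have hSne : S.Nonempty := by
    have := (tendsto_cdf_atBot γ).eventually_lt_const hc0
    rcases this.exists with ⟨x, hx⟩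
    exact ⟨x, hx⟩
  have hSbdd : BddAbove S := by
    have := (tendsto_cdf_atTop γ).eventually_const_lt hc1
    rcases (this.and (eventually_ge_atTop (0:ℝ))).exists with ⟨M, hM, _⟩
    refine ⟨M, fun x hx => ?_⟩
    by_contra h
    push_neg at h
    have := (monotone_cdf γ) h.le
    exact absurd hx (by simp only [hS, mem_setOf_eq, not_lt]; linarith)
  set t : ℝ := sSup S with ht
  have hsub1 : Iio t ⊆ S := by
    intro x hx
    rcases exists_lt_of_lt_csSup hSne hx with ⟨s, hsS, hxs⟩
    exact lt_of_le_of_lt ((monotone_cdf γ) hxs.le) hsS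
  have hsub2 : S ⊆ Iic t := fun x hx => le_csSup hSbdd hx
  have hcont : Function.leftLim Φ t = Φ t := by
    have h0 : γ {t} = 0 := hsing t
    have := (cdf γ).measure_singleton t
    rw [measure_cdf] at this
    rw [this] at h0
    have h1 : Φ t - Function.leftLim Φ t ≤ 0 := by
      simpa [ENNReal.ofReal_eq_zero] using h0
    have h2 := (monotone_cdf γ).leftLim_le (le_refl t)
    linarith
  have hΦt_le : Φ t ≤ c := by
    rw [← hcont]
    refine le_of_tendsto ((monotone_cdf γ).tendsto_leftLim t) ?_
    filter_upwards [self_mem_nhdsWithin] with x hx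
    exact (hsub1 hx).le
  have hΦt_ge : c ≤ Φ t := by
    have hrc : Tendsto Φ (𝓝[>] t) (𝓝 (Φ t)) :=
      ((cdf γ).right_continuous t).tendsto.mono_left
        (nhdsWithin_mono _ Ioi_subset_Ici_self)
    refine ge_of_tendsto hrc ?_
    filter_upwards [self_mem_nhdsWithin] with x hx
    by_contra h
    push_neg at h
    exact absurd (mem_Iic.mp (hsub2 h)) (not_le.mpr hx)
  have hΦt : Φ t = c := le_antisymm hΦt_le hΦt_ge
  have hγS : γ S = ENNReal.ofReal c := by
    have h1 : γ (Iio t) = γ (Iic t) := by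
      rw [← Iio_union_right, measure_union (by simp) (measurableSet_singleton t),
        hsing t, add_zero]
    have h2 : γ S = γ (Iic t) :=
      le_antisymm (measure_mono hsub2) (h1 ▸ measure_mono hsub1)
    rw [h2, ← ofReal_cdf γ t, ← hΦ, hΦt]
  -- rewrite the event
  have hset : {ω : Ω | (1 - α) * Φ (Z ω) < 1 - Φ k} = Z ⁻¹' S := by
    ext ω
    simp only [hS, mem_setOf_eq, mem_preimage, hc]
    rw [lt_div_iff₀ h1α, mul_comm]
  rw [hset, hcond S hSmeas, hγS, ← ENNReal.ofReal_mul h1α.le]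
  congr 1
  rw [hc]
  field_simp
end
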